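/- arXiv:1410.0532 — 9 statements merged into one kernel-verified Lean document; each statement's English description precedes it below -/
import Mathlib

section
/- For every integer k ≥ 5, the Frobenius number of the quadruple (3k+1, 3k+4, 6k+3, 6k+9) is g(3k+1, 3k+4, 6k+3, 6k+9) = (3k+1)·(k − ⌊(3k+1)/21⌋) − 1. -/
set_option maxHeartbeats 1000000 in
lemma mem_closure_quad {a b c d n : ℕ} :
    n ∈ AddSubmonoid.closure ({a, b, c, d} : Set ℕ) ↔
      ∃ x y z w, n = x * a + y * b + z * c + w * d := by
  constructor
  · intro h
    induction h using AddSubmonoid.closure_induction with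
    | mem u hu =>
      rcases hu with rfl | rfl | rfl | rfl
      · exact ⟨1, 0, 0, 0, by ring⟩
      · exact ⟨0, 1, 0, 0, by ring⟩
      · exact ⟨0, 0, 1, 0, by ring⟩
      · exact ⟨0, 0, 0, 1, by ring⟩
    | zero => exact ⟨0, 0, 0, 0, by ring⟩
    | add p q hp hq ihp ihq =>
      obtain ⟨x1, y1, z1, w1, rfl⟩ := ihp
      obtain ⟨x2, y2, z2, w2, rfl⟩ := ihq
      exact ⟨x1 + x2, y1 + y2, z1 + z2, w1 + w2, by ring⟩
  · rintro ⟨x, y, z, w, rfl⟩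
    have ha : a ∈ AddSubmonoid.closure ({a, b, c, d} : Set ℕ) :=
      AddSubmonoid.subset_closure (by simp)
    have hb : b ∈ AddSubmonoid.closure ({a, b, c, d} : Set ℕ) :=
      AddSubmonoid.subset_closure (by simp)
    have hc : c ∈ AddSubmonoid.closure ({a, b, c, d} : Set ℕ) :=
      AddSubmonoid.subset_closure (by simp)
    have hd : d ∈ AddSubmonoid.closure ({a, b, c, d} : Set ℕ) :=
      AddSubmonoid.subset_closure (by simp)
    have := add_mem (add_mem (add_mem (AddSubmonoid.nsmul_mem _ ha x)
      (AddSubmonoid.nsmul_mem _ hb y)) (AddSubmonoid.nsmul_mem _ hc z))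
      (AddSubmonoid.nsmul_mem _ hd w)
    simpa [nsmul_eq_mul] using this

set_option maxHeartbeats 1000000 in
/-- For every integer `k ≥ 5`, the Frobenius number of the quadruple
`(3k+1, 3k+4, 6k+3, 6k+9)` is `(3k+1)·(k − ⌊(3k+1)/21⌋) − 1`. -/
theorem frobenius_quadruple_3k1 (k : ℕ) (hk : 5 ≤ k) :
    FrobeniusNumber ((3 * k + 1) * (k - (3 * k + 1) / 21) - 1)
      ({3 * k + 1, 3 * k + 4, 6 * k + 3, 6 * k + 9} : Set ℕ) := by
  obtain ⟨j, s, hks, hs⟩ : ∃ j s, k = 7 * j + s ∧ s < 7 := ⟨k / 7, k % 7, by omega, by omega⟩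
  subst hks
  have hq : 7 * j + s - (3 * (7 * j + s) + 1) / 21 = 6 * j + s := by omega
  rw [hq]
  have hG1 : 1 ≤ (3 * (7 * j + s) + 1) * (6 * j + s) :=
    Nat.one_le_iff_ne_zero.mpr (Nat.mul_ne_zero (by omega) (by omega))
  constructor
  · -- the candidate is not representable
    rw [Set.mem_setOf_eq, mem_closure_quad]
    rintro ⟨x, y, z, w, hg⟩
    zify [hG1] at hg
    have hj0 : (0:ℤ) ≤ (j:ℤ) := Int.natCast_nonneg j
    have hs0 : (0:ℤ) ≤ (s:ℤ) := Int.natCast_nonneg s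
    -- structural identity
    obtain ⟨R, hR⟩ : ∃ R : ℤ, R = 3*(y:ℤ) + z + 7*w := ⟨_, rfl⟩
    have hA : (3*((7:ℤ)*j+s)+1) * ((x:ℤ) + y + 2*z + 2*w) + R + 1
        = (3*((7:ℤ)*j+s)+1)*(6*(j:ℤ)+s) := by
      rw [hR]; linear_combination -hg
    have h1 : (3*((7:ℤ)*j+s)+1) * ((6*(j:ℤ)+s) - ((x:ℤ) + y + 2*z + 2*w)) = R + 1 := by
      linear_combination -hA
    have hRnn : (0:ℤ) ≤ R := by rw [hR]; positivity
    have hApos : (0:ℤ) < 3*((7:ℤ)*j+s)+1 := by linarith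
    have hQpos : 0 < (6*(j:ℤ)+s) - ((x:ℤ) + y + 2*z + 2*w) := by
      rcases mul_pos_iff.mp (show (0:ℤ) < (3*((7:ℤ)*j+s)+1) *
        ((6*(j:ℤ)+s) - ((x:ℤ) + y + 2*z + 2*w)) from h1 ▸ by linarith) with ⟨_, h⟩ | ⟨h, _⟩
      · exact h
      · linarith
    have hvle : (y:ℤ)*(3*(7*(j:ℤ)+s)+4) + z*(6*(7*(j:ℤ)+s)+3) + w*(6*(7*(j:ℤ)+s)+9)
        ≤ (3*((7:ℤ)*j+s)+1)*(6*(j:ℤ)+s) - 1 := by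
      have hx0 : (0:ℤ) ≤ (x:ℤ)*(3*(7*(j:ℤ)+s)+1) := by positivity
      linarith [hg]
    have hkey : 7*((y:ℤ)*(3*(7*(j:ℤ)+s)+4) + z*(6*(7*(j:ℤ)+s)+3) + w*(6*(7*(j:ℤ)+s)+9))
        = (6*(7*(j:ℤ)+s)+9)*R + (3*((7:ℤ)*j+s)+1)*((y:ℤ)+12*z) := by
      rw [hR]; ring
    rcases eq_or_lt_of_le (by omega : (1:ℤ) ≤ (6*(j:ℤ)+s) - ((x:ℤ) + y + 2*z + 2*w)) with hQ1 | hQ2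
    · -- Q = 1 : R = 3k
      have hR3 : R = 3*(7*(j:ℤ)+s) := by
        have := h1
        rw [← hQ1] at this
        linarith
      have hy12 : (s:ℤ) ≤ (y:ℤ) + 12*z := by
        have h3 : 3*(y:ℤ) + z + 7*w = 3*(7*(j:ℤ)+s) := by rw [← hR, hR3]
        omega
      have hmul : (3*((7:ℤ)*j+s)+1)*(s:ℤ) ≤ (3*((7:ℤ)*j+s)+1)*((y:ℤ)+12*z) :=
        mul_le_mul_of_nonneg_left hy12 (by linarith)
      rw [hR3] at hkey
      have hid : (6*(7*(j:ℤ)+s)+9)*(3*(7*(j:ℤ)+s)) + (3*((7:ℤ)*j+s)+1)*(s:ℤ)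
          = 7*((3*((7:ℤ)*j+s)+1)*(6*(j:ℤ)+s)) + 7*(3*((7:ℤ)*j+s)+1) - 7 := by ring
      linarith
    · -- Q ≥ 2 : R ≥ 2(3k+1) - 1
      have hQ2' : (2:ℤ) ≤ (6*(j:ℤ)+s) - ((x:ℤ) + y + 2*z + 2*w) := hQ2
      have hR6 : 2*(3*((7:ℤ)*j+s)+1) ≤ R + 1 := by
        have := mul_le_mul_of_nonneg_left hQ2' (le_of_lt hApos)
        linarith [h1]
      have h69 : (0:ℤ) ≤ 6*(7*(j:ℤ)+s)+9 := by linarith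
      have hRge : (6*(7*(j:ℤ)+s)+1 : ℤ) ≤ R := by linarith
      have hmul2 : (6*(7*(j:ℤ)+s)+9)*(6*(7*(j:ℤ)+s)+1) ≤ (6*(7*(j:ℤ)+s)+9)*R :=
        mul_le_mul_of_nonneg_left hRge h69
      have hyz0 : (0:ℤ) ≤ (3*((7:ℤ)*j+s)+1)*((y:ℤ)+12*z) := by positivity
      nlinarith [mul_nonneg hj0 hs0, mul_nonneg hj0 hj0, mul_nonneg hs0 hs0]
  · -- upper bound : everything above is representable
    intro n hn
    simp only [Set.mem_setOf_eq] at hn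
    by_contra hle
    push_neg at hle
    apply hn
    rw [mem_closure_quad]
    have hnG : (3 * (7 * j + s) + 1) * (6 * j + s) ≤ n := by
      have h2 := Nat.lt_iff_add_one_le.mp hle
      rwa [Nat.sub_add_cancel hG1] at h2
    obtain ⟨t, r, hteq, hrlt⟩ : ∃ t r, n = (3 * (7 * j + s) + 1) * t + r ∧
        r < 3 * (7 * j + s) + 1 :=
      ⟨n / (3 * (7 * j + s) + 1), n % (3 * (7 * j + s) + 1),
        (Nat.div_add_mod n (3 * (7 * j + s) + 1)).symm, Nat.mod_lt n (by omega)⟩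
    have ht : 6 * j + s ≤ t := by
      rcases Nat.lt_or_ge t (6 * j + s) with h | h
      · exfalso
        have h3 : (3 * (7 * j + s) + 1) * (t + 1) ≤ (3 * (7 * j + s) + 1) * (6 * j + s) :=
          Nat.mul_le_mul_left _ h
        have h4 : (3 * (7 * j + s) + 1) * (t + 1) = (3 * (7 * j + s) + 1) * t
            + (3 * (7 * j + s) + 1) := by ring
        linarith
      · exact h
    obtain ⟨w0, c, hrw, hc⟩ : ∃ w0 c, r = 7 * w0 + c ∧ c < 7 := ⟨r / 7, r % 7, by omega, by omega⟩
    have hrle : r ≤ 21 * j + 3 * s := by omega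
    rcases (show c = 0 ∨ c = 1 ∨ c = 2 ∨ c = 3 ∨ c = 4 ∨ c = 5 ∨ c = 6 by omega)
      with rfl | rfl | rfl | rfl | rfl | rfl | rfl
    · obtain ⟨x, hx⟩ : ∃ x, t = 2 * w0 + x := ⟨t - 2 * w0, by omega⟩
      exact ⟨x, 0, 0, w0, by rw [hteq, hx, hrw]; ring⟩
    · rcases (show w0 = 0 ∨ w0 = 1 ∨ 2 ≤ w0 by omega) with rfl | rfl | hw
      · obtain ⟨x, hx⟩ : ∃ x, t = 2 + x := ⟨t - 2, by omega⟩
        exact ⟨x, 0, 1, 0, by rw [hteq, hx, hrw]; ring⟩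
      · obtain ⟨x, hx⟩ : ∃ x, t = 4 + x := ⟨t - 4, by omega⟩
        exact ⟨x, 0, 1, 1, by rw [hteq, hx, hrw]; ring⟩
      · obtain ⟨w', hw'⟩ : ∃ w', w0 = 2 + w' := ⟨w0 - 2, by omega⟩
        obtain ⟨x, hx⟩ : ∃ x, t = (2 * w0 + 1) + x := ⟨t - (2 * w0 + 1), by omega⟩
        exact ⟨x, 5, 0, w', by rw [hteq, hx, hrw, hw']; ring⟩
    · rcases (show w0 = 0 ∨ 1 ≤ w0 by omega) with rfl | hw
      · obtain ⟨x, hx⟩ : ∃ x, t = 4 + x := ⟨t - 4, by omega⟩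
        exact ⟨x, 0, 2, 0, by rw [hteq, hx, hrw]; ring⟩
      · obtain ⟨w', hw'⟩ : ∃ w', w0 = 1 + w' := ⟨w0 - 1, by omega⟩
        obtain ⟨x, hx⟩ : ∃ x, t = (2 * w0 + 1) + x := ⟨t - (2 * w0 + 1), by omega⟩
        exact ⟨x, 3, 0, w', by rw [hteq, hx, hrw, hw']; ring⟩
    · obtain ⟨x, hx⟩ : ∃ x, t = (2 * w0 + 1) + x := ⟨t - (2 * w0 + 1), by omega⟩
      exact ⟨x, 1, 0, w0, by rw [hteq, hx, hrw]; ring⟩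
    · rcases (show w0 = 0 ∨ w0 = 1 ∨ 2 ≤ w0 by omega) with rfl | rfl | hw
      · obtain ⟨x, hx⟩ : ∃ x, t = 3 + x := ⟨t - 3, by omega⟩
        exact ⟨x, 1, 1, 0, by rw [hteq, hx, hrw]; ring⟩
      · obtain ⟨x, hx⟩ : ∃ x, t = 5 + x := ⟨t - 5, by omega⟩
        exact ⟨x, 1, 1, 1, by rw [hteq, hx, hrw]; ring⟩
      · obtain ⟨w', hw'⟩ : ∃ w', w0 = 2 + w' := ⟨w0 - 2, by omega⟩
        obtain ⟨x, hx⟩ : ∃ x, t = (2 * w0 + 2) + x := ⟨t - (2 * w0 + 2), by omega⟩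
        exact ⟨x, 6, 0, w', by rw [hteq, hx, hrw, hw']; ring⟩
    · rcases (show w0 = 0 ∨ 1 ≤ w0 by omega) with rfl | hw
      · obtain ⟨x, hx⟩ : ∃ x, t = 5 + x := ⟨t - 5, by omega⟩
        exact ⟨x, 1, 2, 0, by rw [hteq, hx, hrw]; ring⟩
      · obtain ⟨w', hw'⟩ : ∃ w', w0 = 1 + w' := ⟨w0 - 1, by omega⟩
        obtain ⟨x, hx⟩ : ∃ x, t = (2 * w0 + 2) + x := ⟨t - (2 * w0 + 2), by omega⟩
        exact ⟨x, 4, 0, w', by rw [hteq, hx, hrw, hw']; ring⟩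
    · obtain ⟨x, hx⟩ : ∃ x, t = (2 * w0 + 2) + x := ⟨t - (2 * w0 + 2), by omega⟩
      exact ⟨x, 2, 0, w0, by rw [hteq, hx, hrw]; ring⟩
end

section
/- For every integer a ≥ 1, the Frobenius number of the quadruple (21a+1, 21a+4, 42a+3, 42a+9) is g(21a+1, 21a+4, 42a+3, 42a+9) = 126a² + 6a − 1. -/
lemma quad_mem_closure (p q r s n : ℕ) :
    n ∈ AddSubmonoid.closure ({p, q, r, s} : Set ℕ) ↔
      ∃ x y z w : ℕ, n = x * p + y * q + z * r + w * s := by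
  constructor
  · intro h
    induction h using AddSubmonoid.closure_induction with
    | mem u hu =>
      simp only [Set.mem_insert_iff, Set.mem_singleton_iff] at hu
      rcases hu with rfl | rfl | rfl | rfl
      · exact ⟨1, 0, 0, 0, by ring⟩
      · exact ⟨0, 1, 0, 0, by ring⟩
      · exact ⟨0, 0, 1, 0, by ring⟩
      · exact ⟨0, 0, 0, 1, by ring⟩
    | zero => exact ⟨0, 0, 0, 0, by ring⟩
    | add u v _ _ ih1 ih2 =>
      obtain ⟨x1, y1, z1, w1, rfl⟩ := ih1
      obtain ⟨x2, y2, z2, w2, rfl⟩ := ih2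
      exact ⟨x1 + x2, y1 + y2, z1 + z2, w1 + w2, by ring⟩
  · rintro ⟨x, y, z, w, rfl⟩
    have hp : p ∈ AddSubmonoid.closure ({p, q, r, s} : Set ℕ) :=
      AddSubmonoid.subset_closure (by simp)
    have hq : q ∈ AddSubmonoid.closure ({p, q, r, s} : Set ℕ) :=
      AddSubmonoid.subset_closure (by simp)
    have hr : r ∈ AddSubmonoid.closure ({p, q, r, s} : Set ℕ) :=
      AddSubmonoid.subset_closure (by simp)
    have hs : s ∈ AddSubmonoid.closure ({p, q, r, s} : Set ℕ) :=
      AddSubmonoid.subset_closure (by simp)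
    have key : ∀ c n : ℕ, c ∈ AddSubmonoid.closure ({p, q, r, s} : Set ℕ) →
        n * c ∈ AddSubmonoid.closure ({p, q, r, s} : Set ℕ) := fun c n hc => by
      simpa [smul_eq_mul] using AddSubmonoid.nsmul_mem _ hc n
    exact add_mem (add_mem (add_mem (key p x hp) (key q y hq)) (key r z hr)) (key s w hs)

lemma rep_small (s : ℕ) (hs : s < 21) :
    ∃ y z w : ℕ, 3 * y + z + 7 * w = s ∧ y + 2 * z + 2 * w ≤ 6 := by
  interval_cases s
  · exact ⟨0, 0, 0, by norm_num⟩
  · exact ⟨0, 1, 0, by norm_num⟩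
  · exact ⟨0, 2, 0, by norm_num⟩
  · exact ⟨1, 0, 0, by norm_num⟩
  · exact ⟨1, 1, 0, by norm_num⟩
  · exact ⟨1, 2, 0, by norm_num⟩
  · exact ⟨2, 0, 0, by norm_num⟩
  · exact ⟨0, 0, 1, by norm_num⟩
  · exact ⟨0, 1, 1, by norm_num⟩
  · exact ⟨3, 0, 0, by norm_num⟩
  · exact ⟨1, 0, 1, by norm_num⟩
  · exact ⟨1, 1, 1, by norm_num⟩
  · exact ⟨4, 0, 0, by norm_num⟩
  · exact ⟨2, 0, 1, by norm_num⟩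
  · exact ⟨0, 0, 2, by norm_num⟩
  · exact ⟨5, 0, 0, by norm_num⟩
  · exact ⟨3, 0, 1, by norm_num⟩
  · exact ⟨1, 0, 2, by norm_num⟩
  · exact ⟨6, 0, 0, by norm_num⟩
  · exact ⟨4, 0, 1, by norm_num⟩
  · exact ⟨2, 0, 2, by norm_num⟩

/-- For every integer `a ≥ 1`, the Frobenius number of the quadruple
`(21a+1, 21a+4, 42a+3, 42a+9)` is `126a² + 6a − 1`. -/
theorem frobenius_quadruple_case0 (a : ℕ) (ha : 1 ≤ a) :
    FrobeniusNumber (126 * a ^ 2 + 6 * a - 1)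
      ({21 * a + 1, 21 * a + 4, 42 * a + 3, 42 * a + 9} : Set ℕ) := by
  have hF1 : 1 ≤ 126 * a ^ 2 + 6 * a := by nlinarith
  constructor
  · -- not representable
    rw [Set.mem_setOf_eq, quad_mem_closure]
    rintro ⟨x, y, z, w, h⟩
    have e1 : x * (21 * a + 1) + y * (21 * a + 4) + z * (42 * a + 3) + w * (42 * a + 9) + 1
        = 126 * a ^ 2 + 6 * a := by
      rw [← h, Nat.sub_add_cancel hF1]
    have e2 : (21 * a + 1) * (x + y + 2 * z + 2 * w) + (3 * y + z + 7 * w) + 1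
        = (21 * a + 1) * (6 * a) := by
      zify at e1 ⊢
      linear_combination e1
    have hA : x + y + 2 * z + 2 * w < 6 * a := by
      by_contra h'
      push_neg at h'
      have := Nat.mul_le_mul_left (21 * a + 1) h'
      linarith
    obtain ⟨t, ht⟩ : ∃ t, x + y + 2 * z + 2 * w + t + 1 = 6 * a :=
      ⟨6 * a - (x + y + 2 * z + 2 * w) - 1, by omega⟩
    have e3 : (3 * y + z + 7 * w) + 1 = (21 * a + 1) * (t + 1) := by
      zify at e2 ht ⊢
      linear_combination e2 - (21 * a + 1) * ht
    rcases Nat.eq_zero_or_pos t with rfl | htpos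
    · simp only [zero_add, mul_one] at e3
      omega
    · have : (21 * a + 1) * 2 ≤ (21 * a + 1) * (t + 1) :=
        Nat.mul_le_mul_left _ (by omega)
      have hT : 42 * a + 1 ≤ 3 * y + z + 7 * w := by linarith
      omega
  · -- every larger number representable
    intro k hk
    by_contra hlt
    push_neg at hlt
    apply hk
    rw [quad_mem_closure]
    have hk1 : 126 * a ^ 2 + 6 * a - 1 + 1 ≤ k := Nat.succ_le_of_lt hlt
    rw [Nat.sub_add_cancel hF1] at hk1
    have hk6 : 6 * a * (21 * a + 1) ≤ k := by nlinarith [hk1]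
    set m := 21 * a + 1 with hm
    have hmod := Nat.div_add_mod k m
    set Q := k / m with hQdef
    set r := k % m with hrdef
    have hrm : r < m := Nat.mod_lt _ (by omega)
    have hQ : 6 * a ≤ Q := by
      by_contra h'
      push_neg at h'
      have h1 : Q + 1 ≤ 6 * a := h'
      have h2 : m * (Q + 1) ≤ m * (6 * a) := Nat.mul_le_mul_left _ h1
      have h3 : m * (6 * a) = 6 * a * m := by ring
      nlinarith
    have hr21 : r ≤ 21 * a := by omega
    rcases eq_or_lt_of_le hr21 with hreq | hrlt
    · -- r = 21a : use w = 3a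
      obtain ⟨u, hu⟩ : ∃ u, Q = 6 * a + u := ⟨Q - 6 * a, by omega⟩
      refine ⟨u, 0, 0, 3 * a, ?_⟩
      have : k = m * Q + r := hmod.symm
      rw [this, hu, hreq, hm]
      ring
    · -- r < 21a
      have hmod2 := Nat.div_add_mod r 21
      set q := r / 21 with hqdef
      set s := r % 21 with hsdef
      have hs21 : s < 21 := Nat.mod_lt _ (by norm_num)
      have hq : q + 1 ≤ a := by omega
      obtain ⟨y, z, w, hrep, hcost⟩ := rep_small s hs21
      obtain ⟨u, hu⟩ : ∃ u, Q = (y + 2 * z + 2 * (3 * q + w)) + u :=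
        ⟨Q - (y + 2 * z + 2 * (3 * q + w)), by omega⟩
      refine ⟨u, y, z, 3 * q + w, ?_⟩
      have hk' : k = m * Q + r := hmod.symm
      have hr' : r = 21 * q + s := by omega
      rw [hk', hu, hr', ← hrep, hm]
      ring
end

section
/- For every integer a ≥ 1, the Frobenius number of the quadruple (21a+4, 21a+7, 42a+9, 42a+15) is g(21a+4, 21a+7, 42a+9, 42a+15) = 126a² + 45a + 3. -/
/-- Auxiliary: every residue `i ≤ 21a+3` can be written as `3y+z+7w` with cost
`y+2z+2w ≤ 6a+1`. -/
lemma frob_quad_rep_aux : ∀ a : ℕ, 1 ≤ a → ∀ i : ℕ, i ≤ 21 * a + 3 →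
    ∃ y z w : ℕ, 3 * y + z + 7 * w = i ∧ y + 2 * z + 2 * w ≤ 6 * a + 1 := by
  intro a ha
  induction a, ha using Nat.le_induction with
  | base =>
    intro i hi
    interval_cases i
    · exact ⟨0, 0, 0, by omega⟩
    · exact ⟨0, 1, 0, by omega⟩
    · exact ⟨0, 2, 0, by omega⟩
    · exact ⟨1, 0, 0, by omega⟩
    · exact ⟨1, 1, 0, by omega⟩
    · exact ⟨1, 2, 0, by omega⟩
    · exact ⟨2, 0, 0, by omega⟩
    · exact ⟨0, 0, 1, by omega⟩
    · exact ⟨0, 1, 1, by omega⟩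
    · exact ⟨3, 0, 0, by omega⟩
    · exact ⟨1, 0, 1, by omega⟩
    · exact ⟨1, 1, 1, by omega⟩
    · exact ⟨4, 0, 0, by omega⟩
    · exact ⟨2, 0, 1, by omega⟩
    · exact ⟨0, 0, 2, by omega⟩
    · exact ⟨5, 0, 0, by omega⟩
    · exact ⟨3, 0, 1, by omega⟩
    · exact ⟨1, 0, 2, by omega⟩
    · exact ⟨6, 0, 0, by omega⟩
    · exact ⟨4, 0, 1, by omega⟩
    · exact ⟨2, 0, 2, by omega⟩
    · exact ⟨0, 0, 3, by omega⟩
    · exact ⟨5, 0, 1, by omega⟩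
    · exact ⟨3, 0, 2, by omega⟩
    · exact ⟨1, 0, 3, by omega⟩
  | succ a ha IH =>
    intro i hi
    by_cases h : i ≤ 21 * a + 3
    · obtain ⟨y, z, w, h1, h2⟩ := IH i h
      exact ⟨y, z, w, h1, by omega⟩
    · obtain ⟨y, z, w, h1, h2⟩ := IH (i - 21) (by omega)
      exact ⟨y, z, w + 3, by omega, by omega⟩

/-- Members of the closure of a 4-element set are nonnegative combinations. -/
lemma frob_quad_closure_mem {A B C D n : ℕ}
    (h : n ∈ AddSubmonoid.closure ({A, B, C, D} : Set ℕ)) :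
    ∃ x y z w : ℕ, n = x * A + y * B + z * C + w * D := by
  induction h using AddSubmonoid.closure_induction with
  | mem g hg =>
    simp only [Set.mem_insert_iff, Set.mem_singleton_iff] at hg
    rcases hg with rfl | rfl | rfl | rfl
    · exact ⟨1, 0, 0, 0, by ring⟩
    · exact ⟨0, 1, 0, 0, by ring⟩
    · exact ⟨0, 0, 1, 0, by ring⟩
    · exact ⟨0, 0, 0, 1, by ring⟩
  | zero => exact ⟨0, 0, 0, 0, by ring⟩
  | add p q hp hq ihp ihq =>
    obtain ⟨x1, y1, z1, w1, e1⟩ := ihp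
    obtain ⟨x2, y2, z2, w2, e2⟩ := ihq
    exact ⟨x1 + x2, y1 + y2, z1 + z2, w1 + w2, by rw [e1, e2]; ring⟩

/-- Nonnegative combinations are in the closure. -/
lemma frob_quad_comb_mem {A B C D : ℕ} (x y z w : ℕ) :
    x * A + y * B + z * C + w * D ∈ AddSubmonoid.closure ({A, B, C, D} : Set ℕ) := by
  have hA : A ∈ AddSubmonoid.closure ({A, B, C, D} : Set ℕ) :=
    AddSubmonoid.subset_closure (by simp)
  have hB : B ∈ AddSubmonoid.closure ({A, B, C, D} : Set ℕ) :=
    AddSubmonoid.subset_closure (by simp)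
  have hC : C ∈ AddSubmonoid.closure ({A, B, C, D} : Set ℕ) :=
    AddSubmonoid.subset_closure (by simp)
  have hD : D ∈ AddSubmonoid.closure ({A, B, C, D} : Set ℕ) :=
    AddSubmonoid.subset_closure (by simp)
  have h1 := AddSubmonoid.nsmul_mem _ hA x
  have h2 := AddSubmonoid.nsmul_mem _ hB y
  have h3 := AddSubmonoid.nsmul_mem _ hC z
  have h4 := AddSubmonoid.nsmul_mem _ hD w
  rw [smul_eq_mul] at h1 h2 h3 h4
  exact add_mem (add_mem (add_mem h1 h2) h3) h4

/-- For every integer `a ≥ 1`, the Frobenius number of the quadruple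
`(21a+4, 21a+7, 42a+9, 42a+15)` is `126a² + 45a + 3`. -/
theorem frobenius_quadruple_case1 (a : ℕ) (ha : 1 ≤ a) :
    FrobeniusNumber (126 * a ^ 2 + 45 * a + 3)
      ({21 * a + 4, 21 * a + 7, 42 * a + 9, 42 * a + 15} : Set ℕ) := by
  constructor
  · -- F is not representable
    intro hF
    obtain ⟨x, y, z, w, h⟩ := frob_quad_closure_mem hF
    have hz : (126 * (a:ℤ) ^ 2 + 45 * a + 3) =
        x * (21 * a + 4) + y * (21 * a + 7) + z * (42 * a + 9) + w * (42 * a + 15) := by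
      exact_mod_cast h
    set t : ℤ := 6 * (a:ℤ) + 1 - ((x:ℤ) + y + 2 * z + 2 * w) with htdef
    have hNt : (3 * (y:ℤ) + z + 7 * w) + 1 = (21 * (a:ℤ) + 4) * t := by
      rw [htdef]; linear_combination -hz
    have hx0 : (0:ℤ) ≤ x := Int.natCast_nonneg x
    have hy0 : (0:ℤ) ≤ y := Int.natCast_nonneg y
    have hz0 : (0:ℤ) ≤ z := Int.natCast_nonneg z
    have hw0 : (0:ℤ) ≤ w := Int.natCast_nonneg w
    have ha' : (1:ℤ) ≤ a := by exact_mod_cast ha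
    have ht1 : 1 ≤ t := by
      by_contra h'
      push_neg at h'
      have h'' : t ≤ 0 := by omega
      have : (21 * (a:ℤ) + 4) * t ≤ 0 :=
        mul_nonpos_of_nonneg_of_nonpos (by linarith) h''
      linarith
    have hmul : (42 * (a:ℤ) + 15) * 1 ≤ (42 * (a:ℤ) + 15) * t :=
      mul_le_mul_of_nonneg_left ht1 (by linarith)
    nlinarith [hNt, hmul]
  · -- every k > F is representable
    intro k hk
    by_contra hgt
    push_neg at hgt
    apply hk
    have hk1 : 126 * a ^ 2 + 45 * a + 3 + 1 ≤ k := Nat.succ_le_of_lt hgt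
    set d : ℕ := k - (126 * a ^ 2 + 45 * a + 3 + 1) with hddef
    have hd : 126 * a ^ 2 + 45 * a + 3 + 1 + d = k := Nat.add_sub_cancel' hk1
    obtain ⟨m, i, hdm, hilt⟩ : ∃ m i : ℕ, (21 * a + 4) * m + i = d ∧ i < 21 * a + 4 :=
      ⟨d / (21 * a + 4), d % (21 * a + 4), Nat.div_add_mod d (21 * a + 4),
        Nat.mod_lt _ (by omega)⟩
    obtain ⟨y, z, w, h2, hc⟩ := frob_quad_rep_aux a ha i (by omega)
    set x : ℕ := 6 * a + 1 + m - (y + 2 * z + 2 * w) with hxdef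
    have h3 : x + (y + 2 * z + 2 * w) = 6 * a + 1 + m := by omega
    have hkeq : k = x * (21 * a + 4) + y * (21 * a + 7) + z * (42 * a + 9) + w * (42 * a + 15) := by
      have c1 : k = (21 * a + 4) * (6 * a + 1) + ((21 * a + 4) * m + (3 * y + z + 7 * w)) := by
        rw [h2, hdm]
        have : (21 * a + 4) * (6 * a + 1) = 126 * a ^ 2 + 45 * a + 3 + 1 := by ring
        rw [this]
        exact hd.symm
      calc k = (21 * a + 4) * (x + (y + 2 * z + 2 * w)) + (3 * y + z + 7 * w) := by
              rw [h3, c1]; ring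
        _ = x * (21 * a + 4) + y * (21 * a + 7) + z * (42 * a + 9) + w * (42 * a + 15) := by ring
    rw [hkeq]
    exact frob_quad_comb_mem x y z w
end

section
/- For every integer a ≥ 1, the Frobenius number of the quadruple (21a+13, 21a+16, 42a+27, 42a+33) is g(21a+13, 21a+16, 42a+27, 42a+33) = 126a² + 162a + 51. -/
/-- Every explicit combination lies in the closure. -/
lemma quad_rep_mem (A B C D x y z w : ℕ) :
    x * A + y * B + z * C + w * D ∈ AddSubmonoid.closure ({A, B, C, D} : Set ℕ) := by
  have hA : A ∈ AddSubmonoid.closure ({A, B, C, D} : Set ℕ) :=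
    AddSubmonoid.subset_closure (by simp)
  have hB : B ∈ AddSubmonoid.closure ({A, B, C, D} : Set ℕ) :=
    AddSubmonoid.subset_closure (by simp)
  have hC : C ∈ AddSubmonoid.closure ({A, B, C, D} : Set ℕ) :=
    AddSubmonoid.subset_closure (by simp)
  have hD : D ∈ AddSubmonoid.closure ({A, B, C, D} : Set ℕ) :=
    AddSubmonoid.subset_closure (by simp)
  have h1 := AddSubmonoid.nsmul_mem _ hA x
  have h2 := AddSubmonoid.nsmul_mem _ hB y
  have h3 := AddSubmonoid.nsmul_mem _ hC z
  have h4 := AddSubmonoid.nsmul_mem _ hD w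
  simp only [smul_eq_mul] at h1 h2 h3 h4
  exact add_mem (add_mem (add_mem h1 h2) h3) h4

/-- Members of the closure are explicit combinations. -/
lemma quad_mem_rep {A B C D m : ℕ} (h : m ∈ AddSubmonoid.closure ({A, B, C, D} : Set ℕ)) :
    ∃ x y z w, m = x * A + y * B + z * C + w * D := by
  induction h using AddSubmonoid.closure_induction with
  | mem u hu =>
    rcases hu with h | h | h | h
    · exact ⟨1, 0, 0, 0, by simp [h]⟩
    · exact ⟨0, 1, 0, 0, by simp [h]⟩
    · exact ⟨0, 0, 1, 0, by simp [h]⟩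
    · simp only [Set.mem_singleton_iff] at h
      exact ⟨0, 0, 0, 1, by simp [h]⟩
  | zero => exact ⟨0, 0, 0, 0, by simp⟩
  | add u v hu hv ihu ihv =>
    obtain ⟨x1, y1, z1, w1, e1⟩ := ihu
    obtain ⟨x2, y2, z2, w2, e2⟩ := ihv
    exact ⟨x1 + x2, y1 + y2, z1 + z2, w1 + w2, by rw [e1, e2]; ring⟩

/-- Key representation lemma for remainders. -/
lemma quad_key_rep (a r : ℕ) (ha : 1 ≤ a) (hr : r ≤ 21 * a + 12) :
    ∃ y z w, 3 * y + z + 7 * w = r ∧ y + 2 * z + 2 * w ≤ 6 * a + 4 := by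
  rcases le_or_gt r (18 * a + 2) with h | h
  · exact ⟨r / 3, r % 3, 0, by omega, by omega⟩
  rcases le_or_gt r (21 * a + 3) with h2 | h2
  · exact ⟨42 * a + 7 - 2 * r, 0, r - (18 * a + 3), by omega, by omega⟩
  rcases le_or_gt r (21 * a + 7) with h3 | h3
  · exact ⟨42 * a + 14 - 2 * r, 0, r - (18 * a + 6), by omega, by omega⟩
  rcases le_or_gt r (21 * a + 10) with h4 | h4
  · exact ⟨42 * a + 21 - 2 * r, 0, r - (18 * a + 9), by omega, by omega⟩
  · exact ⟨42 * a + 28 - 2 * r, 0, r - (18 * a + 12), by omega, by omega⟩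

/-- For every integer `a ≥ 1`, the Frobenius number of the quadruple
`(21a+13, 21a+16, 42a+27, 42a+33)` is `126a² + 162a + 51`. -/
theorem frobenius_quadruple_case4 (a : ℕ) (ha : 1 ≤ a) :
    FrobeniusNumber (126 * a ^ 2 + 162 * a + 51)
      ({21 * a + 13, 21 * a + 16, 42 * a + 27, 42 * a + 33} : Set ℕ) := by
  constructor
  · -- non-representability
    intro hmem
    obtain ⟨x, y, z, w, hE⟩ := quad_mem_rep hmem
    have hkey : (21 * a + 13) * (x + y + 2 * z + 2 * w) + (3 * y + z + 7 * w)
        = 126 * a ^ 2 + 162 * a + 51 := by rw [hE]; ring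
    set n := x + y + 2 * z + 2 * w with hn
    set N := 3 * y + z + 7 * w with hN
    have hnlt : n ≤ 6 * a + 3 := by
      by_contra hc
      push_neg at hc
      have : (21 * a + 13) * (6 * a + 4) ≤ (21 * a + 13) * n := Nat.mul_le_mul_left _ hc
      have he : (21 * a + 13) * (6 * a + 4) = 126 * a ^ 2 + 162 * a + 52 := by ring
      omega
    set s := 6 * a + 4 - n with hs
    have hns : n + s = 6 * a + 4 := by omega
    have hsum : (21 * a + 13) * n + (21 * a + 13) * s = 126 * a ^ 2 + 162 * a + 52 := by
      rw [← Nat.mul_add, hns]; ring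
    have hR : (21 * a + 13) * s = N + 1 := by omega
    have hs1 : 1 ≤ s := by
      rcases Nat.eq_zero_or_pos s with h0 | h0
      · rw [h0] at hR; simp at hR
      · exact h0
    have hexp : 21 * (a * s) + 13 * s = N + 1 := by rw [← hR]; ring
    have hP : a * 1 ≤ a * s := Nat.mul_le_mul_left a hs1
    set P := a * s with hPdef
    omega
  · -- upper bound
    intro k hk
    by_contra hlt
    push_neg at hlt
    apply hk
    have h1 : (21 * a + 13) * (k / (21 * a + 13)) + k % (21 * a + 13) = k :=
      Nat.div_add_mod k (21 * a + 13)
    set q := k / (21 * a + 13) with hq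
    set r := k % (21 * a + 13) with hr
    have hrlt : r < 21 * a + 13 := Nat.mod_lt _ (by omega)
    have hqge : 6 * a + 4 ≤ q := by
      by_contra hc
      push_neg at hc
      have h2 : (21 * a + 13) * q ≤ (21 * a + 13) * (6 * a + 3) :=
        Nat.mul_le_mul_left _ (by omega)
      have he : (21 * a + 13) * (6 * a + 3) = 126 * a ^ 2 + 141 * a + 39 := by ring
      omega
    obtain ⟨y, z, w, hrep, hcost⟩ := quad_key_rep a r ha (by omega)
    have hx : (q - (y + 2 * z + 2 * w)) + (y + 2 * z + 2 * w) = q := by omega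
    have hkeq : k = (q - (y + 2 * z + 2 * w)) * (21 * a + 13) + y * (21 * a + 16)
        + z * (42 * a + 27) + w * (42 * a + 33) := by
      have : (q - (y + 2 * z + 2 * w)) * (21 * a + 13) + y * (21 * a + 16)
          + z * (42 * a + 27) + w * (42 * a + 33)
          = (21 * a + 13) * ((q - (y + 2 * z + 2 * w)) + (y + 2 * z + 2 * w))
            + (3 * y + z + 7 * w) := by ring
      rw [this, hx, hrep, h1]
    rw [hkeq]
    exact quad_rep_mem _ _ _ _ _ _ _ _
end

section
/- For every integer a ≥ 0, the Frobenius number of the quadruple (21a+16, 21a+19, 42a+33, 42a+39) is g(21a+16, 21a+19, 42a+33, 42a+39) = 126a² + 201a + 79. -/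
/-- Membership in the closure of a 4-element set of naturals. -/
lemma mem_closure_four {p q r s n : ℕ} :
    n ∈ AddSubmonoid.closure ({p, q, r, s} : Set ℕ) ↔
      ∃ x1 x2 x3 x4 : ℕ, x1 * p + x2 * q + x3 * r + x4 * s = n := by
  constructor
  · intro h
    induction h using AddSubmonoid.closure_induction with
    | mem x hx =>
      rcases hx with rfl | rfl | rfl | rfl
      · exact ⟨1, 0, 0, 0, by ring⟩
      · exact ⟨0, 1, 0, 0, by ring⟩
      · exact ⟨0, 0, 1, 0, by ring⟩
      · exact ⟨0, 0, 0, 1, by ring⟩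
    | zero => exact ⟨0, 0, 0, 0, by ring⟩
    | add x y _ _ hx hy =>
      obtain ⟨a1, a2, a3, a4, ha⟩ := hx
      obtain ⟨b1, b2, b3, b4, hb⟩ := hy
      exact ⟨a1 + b1, a2 + b2, a3 + b3, a4 + b4, by rw [← ha, ← hb]; ring⟩
  · rintro ⟨x1, x2, x3, x4, rfl⟩
    have hp : p ∈ AddSubmonoid.closure ({p, q, r, s} : Set ℕ) :=
      AddSubmonoid.subset_closure (by simp)
    have hq : q ∈ AddSubmonoid.closure ({p, q, r, s} : Set ℕ) :=
      AddSubmonoid.subset_closure (by simp)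
    have hr : r ∈ AddSubmonoid.closure ({p, q, r, s} : Set ℕ) :=
      AddSubmonoid.subset_closure (by simp)
    have hs : s ∈ AddSubmonoid.closure ({p, q, r, s} : Set ℕ) :=
      AddSubmonoid.subset_closure (by simp)
    have h1 := AddSubmonoid.nsmul_mem _ hp x1
    have h2 := AddSubmonoid.nsmul_mem _ hq x2
    have h3 := AddSubmonoid.nsmul_mem _ hr x3
    have h4 := AddSubmonoid.nsmul_mem _ hs x4
    simp only [smul_eq_mul] at h1 h2 h3 h4
    exact add_mem (add_mem (add_mem h1 h2) h3) h4

/-- Construction lemma: every residue `c ≤ 21a+15` can be written as `3e + f + 7d`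
with weight `e + 2f + 2d ≤ 6a + 5`. -/
lemma construct_residue (a c : ℕ) (hc : c ≤ 21 * a + 15) :
    ∃ e f d : ℕ, 3 * e + f + 7 * d = c ∧ e + 2 * f + 2 * d ≤ 6 * a + 5 := by
  set t := c / 21 with ht
  set u := c % 21 with hu
  have h1 : 21 * t + u = c := Nat.div_add_mod c 21
  have h2 : u < 21 := Nat.mod_lt _ (by norm_num)
  interval_cases u
  · exact ⟨0, 0, 3 * t, by omega, by omega⟩
  · exact ⟨0, 1, 3 * t, by omega, by omega⟩
  · exact ⟨0, 2, 3 * t, by omega, by omega⟩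
  · exact ⟨1, 0, 3 * t, by omega, by omega⟩
  · exact ⟨1, 1, 3 * t, by omega, by omega⟩
  · exact ⟨1, 2, 3 * t, by omega, by omega⟩
  · exact ⟨2, 0, 3 * t, by omega, by omega⟩
  · exact ⟨0, 0, 3 * t + 1, by omega, by omega⟩
  · exact ⟨0, 1, 3 * t + 1, by omega, by omega⟩
  · exact ⟨3, 0, 3 * t, by omega, by omega⟩
  · exact ⟨1, 0, 3 * t + 1, by omega, by omega⟩
  · exact ⟨1, 1, 3 * t + 1, by omega, by omega⟩
  · exact ⟨4, 0, 3 * t, by omega, by omega⟩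
  · exact ⟨2, 0, 3 * t + 1, by omega, by omega⟩
  · exact ⟨0, 0, 3 * t + 2, by omega, by omega⟩
  · exact ⟨5, 0, 3 * t, by omega, by omega⟩
  · exact ⟨3, 0, 3 * t + 1, by omega, by omega⟩
  · exact ⟨1, 0, 3 * t + 2, by omega, by omega⟩
  · exact ⟨6, 0, 3 * t, by omega, by omega⟩
  · exact ⟨4, 0, 3 * t + 1, by omega, by omega⟩
  · exact ⟨2, 0, 3 * t + 2, by omega, by omega⟩

/-- For every integer `a ≥ 0`, the Frobenius number of the quadruple
`(21a+16, 21a+19, 42a+33, 42a+39)` is `126a² + 201a + 79`. -/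
theorem frobenius_quadruple_case5 (a : ℕ) :
    FrobeniusNumber (126 * a ^ 2 + 201 * a + 79)
      ({21 * a + 16, 21 * a + 19, 42 * a + 33, 42 * a + 39} : Set ℕ) := by
  constructor
  · -- non-representability
    intro hmem
    rw [mem_closure_four] at hmem
    obtain ⟨x1, x2, x3, x4, h⟩ := hmem
    have key : (21 * a + 16) * (x1 + x2 + 2 * x3 + 2 * x4) + (3 * x2 + x3 + 7 * x4 + 1)
        = (21 * a + 16) * (6 * a + 5) := by
      rw [show (21 * a + 16) * (6 * a + 5) = (126 * a ^ 2 + 201 * a + 79) + 1 from by ring,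
        ← h]
      ring
    have hW : x1 + x2 + 2 * x3 + 2 * x4 < 6 * a + 5 := by
      by_contra hcon
      push_neg at hcon
      have := Nat.mul_le_mul_left (21 * a + 16) hcon
      linarith [key, this]
    set d : ℕ := 6 * a + 5 - (x1 + x2 + 2 * x3 + 2 * x4) with hd
    have hd1 : 1 ≤ d := by omega
    have hdsum : (x1 + x2 + 2 * x3 + 2 * x4) + d = 6 * a + 5 := by omega
    have h2 : (21 * a + 16) * (x1 + x2 + 2 * x3 + 2 * x4) + (3 * x2 + x3 + 7 * x4 + 1)
        = (21 * a + 16) * (x1 + x2 + 2 * x3 + 2 * x4) + (21 * a + 16) * d := by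
      rw [← Nat.mul_add, hdsum]; exact key
    have h3 : 3 * x2 + x3 + 7 * x4 + 1 = (21 * a + 16) * d := by omega
    have h4 : 21 * a + 16 ≤ (21 * a + 16) * d := Nat.le_mul_of_pos_right _ hd1
    omega
  · -- every larger number is representable
    intro k hk
    simp only [Set.mem_setOf_eq] at hk
    by_contra hlt
    push_neg at hlt
    apply hk
    rw [mem_closure_four]
    set m := k / (21 * a + 16) with hm
    set c := k % (21 * a + 16) with hc
    have hkeq : (21 * a + 16) * m + c = k := Nat.div_add_mod k (21 * a + 16)
    have hcle : c ≤ 21 * a + 15 := by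
      have := Nat.mod_lt k (y := 21 * a + 16) (by omega)
      omega
    have hmge : 6 * a + 5 ≤ m := by
      rw [hm, Nat.le_div_iff_mul_le (by omega : 0 < 21 * a + 16)]
      nlinarith [hlt]
    obtain ⟨e, f, d, hefd, hw⟩ := construct_residue a c hcle
    refine ⟨m - (e + 2 * f + 2 * d), e, f, d, ?_⟩
    have hx1 : (m - (e + 2 * f + 2 * d)) + (e + 2 * f + 2 * d) = m := by omega
    calc (m - (e + 2 * f + 2 * d)) * (21 * a + 16) + e * (21 * a + 19) + f * (42 * a + 33)
          + d * (42 * a + 39)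
        = ((m - (e + 2 * f + 2 * d)) + (e + 2 * f + 2 * d)) * (21 * a + 16)
          + (3 * e + f + 7 * d) := by ring
      _ = m * (21 * a + 16) + c := by rw [hx1, hefd]
      _ = k := by rw [← hkeq]; ring
end

section
/- For every integer a ≥ 0, the Frobenius number of the quadruple (21a+19, 21a+22, 42a+39, 42a+45) is g(21a+19, 21a+22, 42a+39, 42a+45) = 126a² + 240a + 113. -/
lemma mem_closure_quad_s7 (A B C D n : ℕ) :
    n ∈ AddSubmonoid.closure ({A, B, C, D} : Set ℕ) ↔
      ∃ α β γ δ : ℕ, n = α * A + β * B + γ * C + δ * D := by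
  constructor
  · intro h
    induction h using AddSubmonoid.closure_induction with
    | mem x hx =>
      rcases hx with h | h | h | h
      · exact ⟨1, 0, 0, 0, by simp [h]⟩
      · exact ⟨0, 1, 0, 0, by simp [h]⟩
      · exact ⟨0, 0, 1, 0, by simp [h]⟩
      · rw [Set.mem_singleton_iff] at h
        exact ⟨0, 0, 0, 1, by simp [h]⟩
    | zero => exact ⟨0, 0, 0, 0, by simp⟩
    | add x y hx hy ihx ihy =>
      obtain ⟨α, β, γ, δ, rfl⟩ := ihx
      obtain ⟨α', β', γ', δ', rfl⟩ := ihy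
      exact ⟨α + α', β + β', γ + γ', δ + δ', by ring⟩
  · rintro ⟨α, β, γ, δ, rfl⟩
    have hA : A ∈ AddSubmonoid.closure ({A, B, C, D} : Set ℕ) :=
      AddSubmonoid.subset_closure (by simp)
    have hB : B ∈ AddSubmonoid.closure ({A, B, C, D} : Set ℕ) :=
      AddSubmonoid.subset_closure (by simp)
    have hC : C ∈ AddSubmonoid.closure ({A, B, C, D} : Set ℕ) :=
      AddSubmonoid.subset_closure (by simp)
    have hD : D ∈ AddSubmonoid.closure ({A, B, C, D} : Set ℕ) :=
      AddSubmonoid.subset_closure (by simp)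
    exact add_mem (add_mem (add_mem (nsmul_mem hA α) (nsmul_mem hB β)) (nsmul_mem hC γ))
      (nsmul_mem hD δ)

lemma cost_lemma (a r : ℕ) (hr : r < 21 * a + 19) :
    ∃ y z w : ℕ, 3 * y + z + 7 * w = r ∧ y + 2 * z + 2 * w ≤ 6 * a + 6 := by
  obtain ⟨s, t, ht, hs, hrst⟩ : ∃ s t, t < 21 ∧ s ≤ a ∧ r = 21 * s + t :=
    ⟨r / 21, r % 21, by omega, by omega, by omega⟩
  interval_cases t
  · exact ⟨0, 0, 3 * s + 0, by omega, by omega⟩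
  · exact ⟨0, 1, 3 * s + 0, by omega, by omega⟩
  · exact ⟨0, 2, 3 * s + 0, by omega, by omega⟩
  · exact ⟨1, 0, 3 * s + 0, by omega, by omega⟩
  · exact ⟨1, 1, 3 * s + 0, by omega, by omega⟩
  · exact ⟨1, 2, 3 * s + 0, by omega, by omega⟩
  · exact ⟨2, 0, 3 * s + 0, by omega, by omega⟩
  · exact ⟨0, 0, 3 * s + 1, by omega, by omega⟩
  · exact ⟨0, 1, 3 * s + 1, by omega, by omega⟩
  · exact ⟨3, 0, 3 * s + 0, by omega, by omega⟩
  · exact ⟨1, 0, 3 * s + 1, by omega, by omega⟩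
  · exact ⟨1, 1, 3 * s + 1, by omega, by omega⟩
  · exact ⟨4, 0, 3 * s + 0, by omega, by omega⟩
  · exact ⟨2, 0, 3 * s + 1, by omega, by omega⟩
  · exact ⟨0, 0, 3 * s + 2, by omega, by omega⟩
  · exact ⟨5, 0, 3 * s + 0, by omega, by omega⟩
  · exact ⟨3, 0, 3 * s + 1, by omega, by omega⟩
  · exact ⟨1, 0, 3 * s + 2, by omega, by omega⟩
  · exact ⟨6, 0, 3 * s + 0, by omega, by omega⟩
  · exact ⟨4, 0, 3 * s + 1, by omega, by omega⟩
  · exact ⟨2, 0, 3 * s + 2, by omega, by omega⟩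

/-- For every integer `a ≥ 0`, the Frobenius number of the quadruple
`(21a+19, 21a+22, 42a+39, 42a+45)` is `126a² + 240a + 113`. -/
theorem frobenius_quadruple_case6 (a : ℕ) :
    FrobeniusNumber (126 * a ^ 2 + 240 * a + 113)
      ({21 * a + 19, 21 * a + 22, 42 * a + 39, 42 * a + 45} : Set ℕ) := by
  constructor
  · -- not representable
    intro h
    rw [mem_closure_quad_s7] at h
    obtain ⟨α, β, γ, δ, h⟩ := h
    have key : (α + β + 2 * γ + 2 * δ) * (21 * a + 19) + (3 * β + γ + 7 * δ)
        = 126 * a ^ 2 + 240 * a + 113 := by rw [h]; ring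
    have hmle : α + β + 2 * γ + 2 * δ ≤ 6 * a + 5 := by
      by_contra h'
      push_neg at h'
      have : (6 * a + 6) * (21 * a + 19) ≤ (α + β + 2 * γ + 2 * δ) * (21 * a + 19) :=
        Nat.mul_le_mul_right _ h'
      nlinarith [key]
    rcases Nat.lt_or_ge (α + β + 2 * γ + 2 * δ) (6 * a + 5) with hlt | hge
    · -- m ≤ 6a+4 : counting contradiction
      have h4 : α + β + 2 * γ + 2 * δ ≤ 6 * a + 4 := by omega
      have hmul : (α + β + 2 * γ + 2 * δ) * (21 * a + 19) ≤ (6 * a + 4) * (21 * a + 19) :=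
        Nat.mul_le_mul_right _ h4
      nlinarith [key, h4]
    · -- m = 6a+5 : mod 3 contradiction via omega
      have hm5 : α + β + 2 * γ + 2 * δ = 6 * a + 5 := le_antisymm hmle hge
      have hX : 3 * β + γ + 7 * δ = 21 * a + 18 := by nlinarith [key, hm5]
      omega
  · -- upper bound
    rintro k hk
    by_contra h'
    push_neg at h'
    apply hk
    rw [mem_closure_quad_s7]
    have hApos : 0 < 21 * a + 19 := by omega
    have hdiv : k = k / (21 * a + 19) * (21 * a + 19) + k % (21 * a + 19) :=
      by rw [Nat.mul_comm]; exact (Nat.div_add_mod k (21 * a + 19)).symm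
    have hr : k % (21 * a + 19) < 21 * a + 19 := Nat.mod_lt _ hApos
    have hq : 6 * a + 6 ≤ k / (21 * a + 19) := by
      by_contra hq'
      push_neg at hq'
      have h5 : k / (21 * a + 19) ≤ 6 * a + 5 := by omega
      have : k / (21 * a + 19) * (21 * a + 19) ≤ (6 * a + 5) * (21 * a + 19) :=
        Nat.mul_le_mul_right _ h5
      nlinarith [hdiv, hr, h']
    obtain ⟨y, z, w, hval, hcost⟩ := cost_lemma a (k % (21 * a + 19)) hr
    have hle : y + 2 * z + 2 * w ≤ k / (21 * a + 19) := le_trans hcost hq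
    refine ⟨k / (21 * a + 19) - (y + 2 * z + 2 * w), y, z, w, ?_⟩
    have hα : (k / (21 * a + 19) - (y + 2 * z + 2 * w)) + (y + 2 * z + 2 * w)
        = k / (21 * a + 19) := by omega
    calc k = k / (21 * a + 19) * (21 * a + 19) + k % (21 * a + 19) := hdiv
      _ = ((k / (21 * a + 19) - (y + 2 * z + 2 * w)) + (y + 2 * z + 2 * w)) * (21 * a + 19)
            + (3 * y + z + 7 * w) := by rw [hα, hval]
      _ = (k / (21 * a + 19) - (y + 2 * z + 2 * w)) * (21 * a + 19) + y * (21 * a + 22)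
            + z * (42 * a + 39) + w * (42 * a + 45) := by ring
end

section
/- For every integer k ≥ 1, setting x = 4k+1, the Frobenius number of the quadruple (x, 3x+2, 9x+8, 27x+26) = (4k+1, 12k+5, 36k+17, 108k+53) equals 48k² + 16k − 1 − 3(4k+1)·(k + ⌊2k/13⌋ + ⌊(2k+6)/13⌋ − ⌊(2k+19)/26⌋). -/
/-- Membership in the additive closure of a 4-element set of naturals. -/
lemma mem_closure4_aux {a b c d n : ℕ} :
    n ∈ AddSubmonoid.closure ({a, b, c, d} : Set ℕ) ↔
      ∃ p q r s : ℕ, p * a + q * b + r * c + s * d = n := by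
  constructor
  · intro h
    induction h using AddSubmonoid.closure_induction with
    | mem u hu =>
      simp only [Set.mem_insert_iff, Set.mem_singleton_iff] at hu
      rcases hu with rfl | rfl | rfl | rfl
      exacts [⟨1,0,0,0, by ring⟩, ⟨0,1,0,0, by ring⟩, ⟨0,0,1,0, by ring⟩, ⟨0,0,0,1, by ring⟩]
    | zero => exact ⟨0,0,0,0, by ring⟩
    | add u v _ _ hu hv =>
      obtain ⟨p,q,r,s, rfl⟩ := hu
      obtain ⟨p',q',r',s', rfl⟩ := hv
      exact ⟨p+p', q+q', r+r', s+s', by ring⟩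
  · rintro ⟨p,q,r,s, rfl⟩
    have ha : a ∈ AddSubmonoid.closure ({a, b, c, d} : Set ℕ) := AddSubmonoid.subset_closure (by simp)
    have hb : b ∈ AddSubmonoid.closure ({a, b, c, d} : Set ℕ) := AddSubmonoid.subset_closure (by simp)
    have hc : c ∈ AddSubmonoid.closure ({a, b, c, d} : Set ℕ) := AddSubmonoid.subset_closure (by simp)
    have hd : d ∈ AddSubmonoid.closure ({a, b, c, d} : Set ℕ) := AddSubmonoid.subset_closure (by simp)
    exact add_mem (add_mem (add_mem
      (by simpa [nsmul_eq_mul] using (AddSubmonoid.closure _).nsmul_mem ha p)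
      (by simpa [nsmul_eq_mul] using (AddSubmonoid.closure _).nsmul_mem hb q))
      (by simpa [nsmul_eq_mul] using (AddSubmonoid.closure _).nsmul_mem hc r))
      (by simpa [nsmul_eq_mul] using (AddSubmonoid.closure _).nsmul_mem hd s)

set_option maxHeartbeats 1000000 in
/-- The floor-function identity relating the statement's formula to `φ(4k)`. -/
lemma phi_4k_eq (k : ℕ) (hk : 1 ≤ k) :
    k + 2*k/13 + (2*k+6)/13 - (2*k+19)/26 = 4*((4*k)/13) + ((4*k)%13)/4 := by
  obtain ⟨q, r, hr, rfl⟩ : ∃ q r, r < 26 ∧ k = 26*q + r :=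
    ⟨k/26, k%26, Nat.mod_lt _ (by norm_num), by omega⟩
  interval_cases r <;> omega

/-- `φ(M) = 4⌊M/13⌋ + ⌊(M mod 13)/4⌋` is the max of `4d + c` subject to `13d + 4c ≤ M`. -/
lemma phi_max (M c d : ℕ) (h : 13*d + 4*c ≤ M) : 4*d + c ≤ 4*(M/13) + (M%13)/4 := by
  rcases Nat.lt_or_ge d (M/13) with h2 | h2
  · omega
  · have : d = M/13 ∨ 13*d ≥ M - 12 := by omega
    omega

/-- Lipschitz-type lower bound for `φ`. -/
lemma phi_lb (k m : ℕ) (hm : m ≤ 4*k) :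
    4*(m/13) + (m%13)/4 + 4*k ≥ (4*((4*k)/13) + ((4*k)%13)/4) + m := by
  rcases Nat.lt_or_ge (m/13) ((4*k)/13) with h | h
  · omega
  · have : m/13 = (4*k)/13 := by omega
    omega

/-- For every integer `k ≥ 1`, with `x = 4k+1`, the Frobenius number of the quadruple
`(x, 3x+2, 9x+8, 27x+26) = (4k+1, 12k+5, 36k+17, 108k+53)` equals
`48k² + 16k − 1 − 3(4k+1)·(k + ⌊2k/13⌋ + ⌊(2k+6)/13⌋ − ⌊(2k+19)/26⌋)`. -/
theorem frobenius_recursive_4k1 (k : ℕ) (hk : 1 ≤ k) :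
    FrobeniusNumber
      (48 * k ^ 2 + 16 * k - 1 -
        3 * (4 * k + 1) * (k + 2 * k / 13 + (2 * k + 6) / 13 - (2 * k + 19) / 26))
      ({4 * k + 1, 12 * k + 5, 36 * k + 17, 108 * k + 53} : Set ℕ) := by
  have hTid := phi_4k_eq k hk
  rw [hTid]
  set T := 4*((4*k)/13) + ((4*k)%13)/4 with hTdef
  have hT13 : 13*T ≤ 16*k := by omega
  obtain ⟨G, hG⟩ : ∃ G, T + G = 4*k := ⟨4*k - T, by omega⟩
  have hFval : 48 * k ^ 2 + 16 * k - 1 - 3 * (4 * k + 1) * T = 3*((4*k+1)*G) + (4*k - 1) := by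
    have h1 : 48*k^2 + 16*k = 3*((4*k+1)*T) + 3*((4*k+1)*G) + 4*k := by
      have : 48*k^2 + 16*k = 3*((4*k+1)*(T+G)) + 4*k := by rw [hG]; ring
      rw [this]; ring
    have h2 : 3 * (4 * k + 1) * T = 3*((4*k+1)*T) := by ring
    omega
  rw [hFval]
  constructor
  · -- F is not representable
    show ¬ _
    rw [mem_closure4_aux]
    rintro ⟨p, q, r, s, hrep⟩
    have key : (p + 3*q + 9*r + 27*s)*(4*k+1) + 2*(q + 4*r + 13*s)
        = 3*((4*k+1)*G) + (4*k - 1) := by rw [← hrep]; ring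
    set e := p + 3*q + 9*r + 27*s with hedef
    set m' := q + 4*r + 13*s with hm'def
    -- e ≤ 3G
    have he : e ≤ 3*G := by
      by_contra hcon
      have h3 : (3*G+1)*(4*k+1) ≤ e*(4*k+1) := Nat.mul_le_mul_right _ (by omega)
      have h4 : (3*G+1)*(4*k+1) = 3*((4*k+1)*G) + 4*k + 1 := by ring
      omega
    obtain ⟨j, hj⟩ : ∃ j, e + j = 3*G := ⟨3*G - e, by omega⟩
    have hej : (e + j)*(4*k+1) = 3*((4*k+1)*G) := by rw [hj]; ring
    have hej2 : (e + j)*(4*k+1) = e*(4*k+1) + j*(4*k+1) := by ring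
    have h2m : 2*m' + 1 = j*(4*k+1) + 4*k := by omega
    -- parity: j is odd
    have hjk : j*(4*k+1) = 4*(j*k) + j := by ring
    obtain ⟨i, hi⟩ : ∃ i, j = 2*i + 1 := ⟨j/2, by omega⟩
    have hexp : j*(4*k+1) = 2*(i*(4*k+1)) + (4*k+1) := by rw [hi]; ring
    have hm' : m' = 4*k + i*(4*k+1) := by omega
    have hq : 4*r + 13*s ≤ m' := by omega
    have hp : 3*m' ≤ e + 3*(r + 4*s) := by omega
    rcases Nat.eq_zero_or_pos i with hi0 | hi1
    · -- i = 0 : contradiction with maximality of φ(4k)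
      have hmax := phi_max (4*k) r s (by omega)
      subst hi0
      simp only [Nat.zero_mul] at hm' hexp
      omega
    · -- i ≥ 1 : size contradiction
      have hI : 4*k+1 ≤ i*(4*k+1) := by
        calc 4*k+1 = 1*(4*k+1) := by ring
        _ ≤ i*(4*k+1) := Nat.mul_le_mul_right _ hi1
      omega
  · -- every n > F is representable
    intro n hn
    simp only [Set.mem_setOf_eq] at hn
    by_contra hcon
    push_neg at hcon
    apply hn
    rw [mem_closure4_aux]
    -- decompose n
    obtain ⟨t, rr, hrr, hnval⟩ : ∃ t rr, rr < 4*k+1 ∧ n = t*(4*k+1) + rr :=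
      ⟨n/(4*k+1), n%(4*k+1), Nat.mod_lt _ (by omega), (Nat.div_add_mod' n (4*k+1)).symm⟩
    obtain ⟨m, ε, hε, h2m, hm4k⟩ : ∃ m ε, ε ≤ 1 ∧ 2*m = rr + ε*(4*k+1) ∧ m ≤ 4*k := by
      rcases Nat.even_or_odd rr with ⟨w, hw⟩ | ⟨w, hw⟩
      · exact ⟨w, 0, by omega, by omega, by omega⟩
      · exact ⟨w + 2*k + 1, 1, by omega, by omega, by omega⟩
    set d := m/13 with hd
    set c := (m%13)/4 with hc
    set b := (m%13)%4 with hb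
    have hbc : b + 4*c + 13*d = m := by omega
    have hC2 := phi_lb k m hm4k
    set u := b + 3*c + 9*d with hu
    have huG : u ≤ G := by omega
    have huG' : u*(4*k+1) ≤ G*(4*k+1) := Nat.mul_le_mul_right _ huG
    -- t ≥ 3u + ε
    have ht : 3*u + ε ≤ t := by
      by_contra hcon2
      have h5 : (t+1)*(4*k+1) ≤ (3*u+ε)*(4*k+1) := Nat.mul_le_mul_right _ (by omega)
      have h6 : (t+1)*(4*k+1) = t*(4*k+1) + (4*k+1) := by ring
      have h7 : (3*u+ε)*(4*k+1) = 3*(u*(4*k+1)) + ε*(4*k+1) := by ring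
      have h8 : G*(4*k+1) = (4*k+1)*G := by ring
      omega
    obtain ⟨p, hpt⟩ : ∃ p, t = p + 3*u + ε := ⟨t - (3*u + ε), by omega⟩
    refine ⟨p, b, c, d, ?_⟩
    have h9 : p*(4*k+1) + b*(12*k+5) + c*(36*k+17) + d*(108*k+53)
        = p*(4*k+1) + 3*(u*(4*k+1)) + 2*(b + 4*c + 13*d) := by rw [hu]; ring
    have h10 : t*(4*k+1) = p*(4*k+1) + 3*(u*(4*k+1)) + ε*(4*k+1) := by rw [hpt]; ring
    omega
end

section
/- For every integer k ≥ 5, the Frobenius number of the sextuple (6k+1, 6k+4, 6k+7, 12k+3, 12k+9, 12k+15) is g(6k+1, 6k+4, 6k+7, 12k+3, 12k+9, 12k+15) = (6k+1)·(k − ⌊k/13⌋) − 1. -/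
lemma mem_closure_six {a1 a2 a3 a4 a5 a6 n : ℕ} :
    n ∈ AddSubmonoid.closure ({a1, a2, a3, a4, a5, a6} : Set ℕ) ↔
      ∃ c1 c2 c3 c4 c5 c6 : ℕ,
        c1 * a1 + c2 * a2 + c3 * a3 + c4 * a4 + c5 * a5 + c6 * a6 = n := by
  constructor
  · intro hn
    induction hn using AddSubmonoid.closure_induction with
    | mem x hx =>
      simp only [Set.mem_insert_iff, Set.mem_singleton_iff] at hx
      rcases hx with rfl | rfl | rfl | rfl | rfl | rfl
      · exact ⟨1, 0, 0, 0, 0, 0, by ring⟩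
      · exact ⟨0, 1, 0, 0, 0, 0, by ring⟩
      · exact ⟨0, 0, 1, 0, 0, 0, by ring⟩
      · exact ⟨0, 0, 0, 1, 0, 0, by ring⟩
      · exact ⟨0, 0, 0, 0, 1, 0, by ring⟩
      · exact ⟨0, 0, 0, 0, 0, 1, by ring⟩
    | zero => exact ⟨0, 0, 0, 0, 0, 0, by ring⟩
    | add x y hx hy ihx ihy =>
      obtain ⟨b1, b2, b3, b4, b5, b6, hb⟩ := ihx
      obtain ⟨c1, c2, c3, c4, c5, c6, hc⟩ := ihy
      exact ⟨b1 + c1, b2 + c2, b3 + c3, b4 + c4, b5 + c5, b6 + c6, by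
        rw [← hb, ← hc]; ring⟩
  · rintro ⟨c1, c2, c3, c4, c5, c6, rfl⟩
    have h : ∀ a ∈ ({a1, a2, a3, a4, a5, a6} : Set ℕ), ∀ c : ℕ,
        c * a ∈ AddSubmonoid.closure ({a1, a2, a3, a4, a5, a6} : Set ℕ) := by
      intro a ha c
      simpa [nsmul_eq_mul] using
        nsmul_mem (AddSubmonoid.subset_closure ha) c
    refine add_mem (add_mem (add_mem (add_mem (add_mem ?_ ?_) ?_) ?_) ?_) ?_ <;>
      apply h <;> simp

/-- Key representability lemma: every residue value `r ≤ 6k` can be written as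
`3y + 6z + u + 7v + 13w` with weight `y + z + 2u + 2v + 2w ≤ k - k/13`. -/
lemma key_rep (k r : ℕ) (hk : 5 ≤ k) (hr : r ≤ 6 * k) :
    ∃ y z u v w : ℕ, 3 * y + 6 * z + u + 7 * v + 13 * w = r ∧
      y + z + 2 * u + 2 * v + 2 * w ≤ k - k / 13 := by
  rcases Nat.lt_or_ge r 60 with h | h
  · interval_cases r
    · exact ⟨0, 0, 0, 0, 0, by omega, by omega⟩
    · exact ⟨0, 0, 1, 0, 0, by omega, by omega⟩
    · exact ⟨0, 0, 2, 0, 0, by omega, by omega⟩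
    · exact ⟨1, 0, 0, 0, 0, by omega, by omega⟩
    · exact ⟨1, 0, 1, 0, 0, by omega, by omega⟩
    · exact ⟨1, 0, 2, 0, 0, by omega, by omega⟩
    · exact ⟨0, 1, 0, 0, 0, by omega, by omega⟩
    · exact ⟨0, 0, 0, 1, 0, by omega, by omega⟩
    · exact ⟨0, 0, 1, 1, 0, by omega, by omega⟩
    · exact ⟨1, 1, 0, 0, 0, by omega, by omega⟩
    · exact ⟨1, 0, 0, 1, 0, by omega, by omega⟩
    · exact ⟨1, 0, 1, 1, 0, by omega, by omega⟩
    · exact ⟨0, 2, 0, 0, 0, by omega, by omega⟩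
    · exact ⟨0, 0, 0, 0, 1, by omega, by omega⟩
    · exact ⟨0, 0, 1, 0, 1, by omega, by omega⟩
    · exact ⟨1, 2, 0, 0, 0, by omega, by omega⟩
    · exact ⟨1, 0, 0, 0, 1, by omega, by omega⟩
    · exact ⟨1, 0, 1, 0, 1, by omega, by omega⟩
    · exact ⟨0, 3, 0, 0, 0, by omega, by omega⟩
    · exact ⟨0, 1, 0, 0, 1, by omega, by omega⟩
    · exact ⟨0, 0, 0, 1, 1, by omega, by omega⟩
    · exact ⟨1, 3, 0, 0, 0, by omega, by omega⟩
    · exact ⟨1, 1, 0, 0, 1, by omega, by omega⟩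
    · exact ⟨1, 0, 0, 1, 1, by omega, by omega⟩
    · exact ⟨0, 4, 0, 0, 0, by omega, by omega⟩
    · exact ⟨0, 2, 0, 0, 1, by omega, by omega⟩
    · exact ⟨0, 0, 0, 0, 2, by omega, by omega⟩
    · exact ⟨1, 4, 0, 0, 0, by omega, by omega⟩
    · exact ⟨1, 2, 0, 0, 1, by omega, by omega⟩
    · exact ⟨1, 0, 0, 0, 2, by omega, by omega⟩
    · exact ⟨0, 5, 0, 0, 0, by omega, by omega⟩
    · exact ⟨0, 3, 0, 0, 1, by omega, by omega⟩
    · exact ⟨0, 1, 0, 0, 2, by omega, by omega⟩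
    · exact ⟨1, 5, 0, 0, 0, by omega, by omega⟩
    · exact ⟨1, 3, 0, 0, 1, by omega, by omega⟩
    · exact ⟨1, 1, 0, 0, 2, by omega, by omega⟩
    · exact ⟨0, 6, 0, 0, 0, by omega, by omega⟩
    · exact ⟨0, 4, 0, 0, 1, by omega, by omega⟩
    · exact ⟨0, 2, 0, 0, 2, by omega, by omega⟩
    · exact ⟨0, 0, 0, 0, 3, by omega, by omega⟩
    · exact ⟨1, 4, 0, 0, 1, by omega, by omega⟩
    · exact ⟨1, 2, 0, 0, 2, by omega, by omega⟩
    · exact ⟨1, 0, 0, 0, 3, by omega, by omega⟩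
    · exact ⟨0, 5, 0, 0, 1, by omega, by omega⟩
    · exact ⟨0, 3, 0, 0, 2, by omega, by omega⟩
    · exact ⟨0, 1, 0, 0, 3, by omega, by omega⟩
    · exact ⟨1, 5, 0, 0, 1, by omega, by omega⟩
    · exact ⟨1, 3, 0, 0, 2, by omega, by omega⟩
    · exact ⟨1, 1, 0, 0, 3, by omega, by omega⟩
    · exact ⟨0, 6, 0, 0, 1, by omega, by omega⟩
    · exact ⟨0, 4, 0, 0, 2, by omega, by omega⟩
    · exact ⟨0, 2, 0, 0, 3, by omega, by omega⟩
    · exact ⟨0, 0, 0, 0, 4, by omega, by omega⟩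
    · exact ⟨1, 4, 0, 0, 2, by omega, by omega⟩
    · exact ⟨1, 2, 0, 0, 3, by omega, by omega⟩
    · exact ⟨1, 0, 0, 0, 4, by omega, by omega⟩
    · exact ⟨0, 5, 0, 0, 2, by omega, by omega⟩
    · exact ⟨0, 3, 0, 0, 3, by omega, by omega⟩
    · exact ⟨0, 1, 0, 0, 4, by omega, by omega⟩
    · exact ⟨1, 5, 0, 0, 2, by omega, by omega⟩
  · refine ⟨0, r / 6 - 2 * (r % 6) - 13 * ((r / 6 - 2 * (r % 6)) / 13), 0, 0,
      r % 6 + 6 * ((r / 6 - 2 * (r % 6)) / 13), by omega, by omega⟩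

/-- For every integer `k ≥ 5`, the Frobenius number of the sextuple
`(6k+1, 6k+4, 6k+7, 12k+3, 12k+9, 12k+15)` is `(6k+1)·(k − ⌊k/13⌋) − 1`. -/
theorem frobenius_sextuple (k : ℕ) (hk : 5 ≤ k) :
    FrobeniusNumber ((6 * k + 1) * (k - k / 13) - 1)
      ({6 * k + 1, 6 * k + 4, 6 * k + 7, 12 * k + 3, 12 * k + 9, 12 * k + 15} : Set ℕ) := by
  set m := k - k / 13 with hm
  have hm5 : 5 ≤ m := by omega
  constructor
  · -- (6k+1)*m - 1 is not representable
    simp only [Set.mem_setOf_eq, mem_closure_six]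
    rintro ⟨x1, x2, x3, x4, x5, x6, h⟩
    have he : (6 * k + 1) * (x1 + x2 + x3 + 2 * x4 + 2 * x5 + 2 * x6)
        + (3 * x2 + 6 * x3 + x4 + 7 * x5 + 13 * x6) = (6 * k + 1) * m - 1 := by
      rw [← h]; ring
    set T := x1 + x2 + x3 + 2 * x4 + 2 * x5 + 2 * x6 with hT
    set c := 3 * x2 + 6 * x3 + x4 + 7 * x5 + 13 * x6 with hc
    have h1 : 1 ≤ (6 * k + 1) * m := Nat.one_le_iff_ne_zero.mpr (by positivity)
    have hTm : T < m := by
      rcases Nat.lt_or_ge T m with h' | h'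
      · exact h'
      · exfalso
        have h2 : (6 * k + 1) * m ≤ (6 * k + 1) * T := Nat.mul_le_mul_left _ h'
        generalize (6 * k + 1) * T = P at he h2
        generalize (6 * k + 1) * m = M at he h2 h1
        omega
    have h3 : (6 * k + 1) * T + (6 * k + 1) ≤ (6 * k + 1) * m := by
      rw [← Nat.mul_succ]
      exact Nat.mul_le_mul_left _ hTm
    have hc6 : 6 * k ≤ c := by
      generalize (6 * k + 1) * T = P at he h3
      generalize (6 * k + 1) * m = M at he h3 h1
      omega
    have hcT : 2 * c ≤ 13 * T := by omega
    omega
  · -- every non-representable number is at most (6k+1)*m - 1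
    intro n hn
    simp only [Set.mem_setOf_eq] at hn
    by_contra hlt
    push_neg at hlt
    have hnm : (6 * k + 1) * m ≤ n := by
      have h1 : 1 ≤ (6 * k + 1) * m := Nat.one_le_iff_ne_zero.mpr (by positivity)
      omega
    have hdm := Nat.div_add_mod n (6 * k + 1)
    have hrlt : n % (6 * k + 1) ≤ 6 * k := by
      have := Nat.mod_lt n (show 0 < 6 * k + 1 by omega)
      omega
    obtain ⟨y, z, u, v, w, hval, hcost⟩ := key_rep k (n % (6 * k + 1)) hk hrlt
    have hQ : m ≤ n / (6 * k + 1) := by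
      rcases Nat.lt_or_ge (n / (6 * k + 1)) m with h' | h'
      · exfalso
        have h2 : (6 * k + 1) * (n / (6 * k + 1)) + (6 * k + 1) ≤ (6 * k + 1) * m := by
          rw [← Nat.mul_succ]
          exact Nat.mul_le_mul_left _ h'
        generalize (6 * k + 1) * (n / (6 * k + 1)) = P at hdm h2
        generalize (6 * k + 1) * m = M at hdm h2 hnm
        omega
      · exact h'
    apply hn
    rw [mem_closure_six]
    set Q := n / (6 * k + 1) with hQdef
    refine ⟨Q - (y + z + 2 * u + 2 * v + 2 * w), y, z, u, v, w, ?_⟩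
    have hW : y + z + 2 * u + 2 * v + 2 * w ≤ Q := le_trans hcost hQ
    have h2 : Q - (y + z + 2 * u + 2 * v + 2 * w) + (y + z + 2 * u + 2 * v + 2 * w) = Q := by
      omega
    calc (Q - (y + z + 2 * u + 2 * v + 2 * w)) * (6 * k + 1) + y * (6 * k + 4)
          + z * (6 * k + 7) + u * (12 * k + 3) + v * (12 * k + 9) + w * (12 * k + 15)
        = (6 * k + 1) * (Q - (y + z + 2 * u + 2 * v + 2 * w) + (y + z + 2 * u + 2 * v + 2 * w))
          + (3 * y + 6 * z + u + 7 * v + 13 * w) := by ring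
      _ = (6 * k + 1) * Q + n % (6 * k + 1) := by rw [h2, hval]
      _ = n := hdm
end

section
/- For every integer a ≥ 2, the Frobenius number of the quadruple (a, a+1, a+2, a+4) is g(a, a+1, a+2, a+4) = (a+1)·⌊a/4⌋ + ⌊(a+1)/4⌋ + 2·⌊(a+2)/4⌋ − 1. -/
/-- Membership characterization for the numerical semigroup generated by
`a, a+1, a+2, a+4`. -/
lemma mem_closure_iff_aux (a n : ℕ) :
    n ∈ AddSubmonoid.closure ({a, a + 1, a + 2, a + 4} : Set ℕ) ↔
      ∃ m r : ℕ, r ≤ 4 * m ∧ r + 1 ≠ 4 * m ∧ n = m * a + r := by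
  constructor
  · intro hn
    induction hn using AddSubmonoid.closure_induction with
    | mem x hx =>
      rcases hx with h | h | h | h
      · exact ⟨1, 0, by omega, by omega, by omega⟩
      · exact ⟨1, 1, by omega, by omega, by omega⟩
      · exact ⟨1, 2, by omega, by omega, by omega⟩
      · simp only [Set.mem_singleton_iff] at h
        exact ⟨1, 4, by omega, by omega, by omega⟩
    | zero => exact ⟨0, 0, by omega, by omega, by omega⟩
    | add x y hx hy ihx ihy =>
      obtain ⟨m1, r1, h11, h12, h13⟩ := ihx
      obtain ⟨m2, r2, h21, h22, h23⟩ := ihy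
      refine ⟨m1 + m2, r1 + r2, by omega, by omega, by rw [h13, h23]; ring⟩
  · rintro ⟨m, r, h1, h2, h3⟩
    have hex : ∃ x y z w : ℕ, x + y + z + w = m ∧ y + 2 * z + 4 * w = r := by
      have hmod := Nat.mod_add_div r 4
      rcases (show r % 4 = 0 ∨ r % 4 = 1 ∨ r % 4 = 2 ∨ r % 4 = 3 by omega) with h | h | h | h
      · exact ⟨m - r / 4, 0, 0, r / 4, by omega, by omega⟩
      · exact ⟨m - r / 4 - 1, 1, 0, r / 4, by omega, by omega⟩
      · exact ⟨m - r / 4 - 1, 0, 1, r / 4, by omega, by omega⟩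
      · exact ⟨m - r / 4 - 2, 1, 1, r / 4, by omega, by omega⟩
    obtain ⟨x, y, z, w, hm, hr⟩ := hex
    have heq : n = x * a + y * (a + 1) + z * (a + 2) + w * (a + 4) := by
      rw [h3, ← hm, ← hr]; ring
    rw [heq]
    have g1 : a ∈ ({a, a + 1, a + 2, a + 4} : Set ℕ) := by simp
    have g2 : a + 1 ∈ ({a, a + 1, a + 2, a + 4} : Set ℕ) := by simp
    have g3 : a + 2 ∈ ({a, a + 1, a + 2, a + 4} : Set ℕ) := by simp
    have g4 : a + 4 ∈ ({a, a + 1, a + 2, a + 4} : Set ℕ) := by simp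
    refine add_mem (add_mem (add_mem ?_ ?_) ?_) ?_
    · simpa [nsmul_eq_mul] using
        nsmul_mem (AddSubmonoid.subset_closure g1) x
    · simpa [nsmul_eq_mul] using
        nsmul_mem (AddSubmonoid.subset_closure g2) y
    · simpa [nsmul_eq_mul] using
        nsmul_mem (AddSubmonoid.subset_closure g3) z
    · simpa [nsmul_eq_mul] using
        nsmul_mem (AddSubmonoid.subset_closure g4) w

/-- For every integer `a ≥ 2`, the Frobenius number of the quadruple
`(a, a+1, a+2, a+4)` is `(a+1)·⌊a/4⌋ + ⌊(a+1)/4⌋ + 2·⌊(a+2)/4⌋ − 1`. -/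
theorem frobenius_a_a1_a2_a4 (a : ℕ) (ha : 2 ≤ a) :
    FrobeniusNumber ((a + 1) * (a / 4) + (a + 1) / 4 + 2 * ((a + 2) / 4) - 1)
      ({a, a + 1, a + 2, a + 4} : Set ℕ) := by
  set q := a / 4 with hqdef
  set F := (a + 1) * q + (a + 1) / 4 + 2 * ((a + 2) / 4) - 1 with hFdef
  have hmul : (a + 1) * q = q * a + q := by ring
  have hdm : 4 * q ≤ a ∧ a < 4 * q + 4 := by
    constructor
    · omega
    · omega
  -- compute F + 1 in the four residue cases
  have hF1 : (a % 4 ≤ 1 ∧ F + 1 = q * a + 4 * q) ∨ (2 ≤ a % 4 ∧ F + 1 = q * a + a) := by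
    have e0 : a = 4 * q + a % 4 := by omega
    rcases (show a % 4 = 0 ∨ a % 4 = 1 ∨ a % 4 = 2 ∨ a % 4 = 3 by omega) with h | h | h | h
    · left
      have e1 : (a + 1) / 4 = q := by omega
      have e2 : (a + 2) / 4 = q := by omega
      have hq1 : 1 ≤ q := by omega
      refine ⟨by omega, ?_⟩
      rw [hFdef, e1, e2, hmul]
      have : q * a + q + q + 2 * q - 1 + 1 = q * a + 4 * q - 1 + 1 := by
        congr 1; omega
      rw [this]
      omega
    · left
      have e1 : (a + 1) / 4 = q := by omega
      have e2 : (a + 2) / 4 = q := by omega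
      have hq1 : 1 ≤ q := by omega
      refine ⟨by omega, ?_⟩
      rw [hFdef, e1, e2, hmul]
      have : q * a + q + q + 2 * q - 1 + 1 = q * a + 4 * q - 1 + 1 := by
        congr 1; omega
      rw [this]
      omega
    · right
      have e1 : (a + 1) / 4 = q := by omega
      have e2 : (a + 2) / 4 = q + 1 := by omega
      refine ⟨by omega, ?_⟩
      rw [hFdef, e1, e2, hmul]
      have : q * a + q + q + 2 * (q + 1) - 1 + 1 = q * a + a - 1 + 1 := by
        congr 1; omega
      rw [this]
      omega
    · right
      have e1 : (a + 1) / 4 = q + 1 := by omega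
      have e2 : (a + 2) / 4 = q + 1 := by omega
      refine ⟨by omega, ?_⟩
      rw [hFdef, e1, e2, hmul]
      have : q * a + q + (q + 1) + 2 * (q + 1) - 1 + 1 = q * a + a - 1 + 1 := by
        congr 1; omega
      rw [this]
      omega
  constructor
  · -- F is not representable
    rw [Set.mem_setOf_eq, mem_closure_iff_aux]
    rintro ⟨m, r, h1, h2, h3⟩
    rcases lt_trichotomy m q with hm | hm | hm
    · -- m < q
      have hmul2 : m * a + a ≤ q * a := by
        calc m * a + a = (m + 1) * a := by ring
          _ ≤ q * a := Nat.mul_le_mul_right a (by omega)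
      rcases hF1 with ⟨hs, hF⟩ | ⟨hs, hF⟩
      · linarith
      · linarith
    · -- m = q
      subst hm
      rcases hF1 with ⟨hs, hF⟩ | ⟨hs, hF⟩
      · exact h2 (by linarith)
      · -- F + 1 = q*a + a, F = q*a + r, so r + 1 = a ≤ ... contradiction via size
        -- r ≤ 4*q ≤ a - 2, but r + 1 = a
        have : r + 1 = a := by linarith
        omega
    · -- m > q
      have hmul2 : q * a + a ≤ m * a := by
        calc q * a + a = (q + 1) * a := by ring
          _ ≤ m * a := Nat.mul_le_mul_right a (by omega)
      rcases hF1 with ⟨hs, hF⟩ | ⟨hs, hF⟩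
      · linarith
      · linarith
  · -- upper bound
    intro n hn
    by_contra hcon
    push_neg at hcon
    have hn' : F + 1 ≤ n := hcon
    apply hn
    rw [mem_closure_iff_aux]
    have ha0 : 0 < a := by omega
    have hdm2 : n = n / a * a + n % a := by
      rw [Nat.mul_comm (n / a) a]; exact (Nat.div_add_mod n a).symm
    have hr0 : n % a < a := Nat.mod_lt n ha0
    have key : ∀ m0 : ℕ, q + 1 ≤ m0 → n = m0 * a + n % a → a ≤ 4 * q + 3 →
        ∃ m r : ℕ, r ≤ 4 * m ∧ r + 1 ≠ 4 * m ∧ n = m * a + r := by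
      intro m0 hm0 hne hs
      exact ⟨m0, n % a, by omega, by omega, hne⟩
    rcases hF1 with ⟨hs, hF⟩ | ⟨hs, hF⟩
    · -- a % 4 ≤ 1, F + 1 = q*a + 4*q
      rcases eq_or_lt_of_le hn' with heq | hlt
      · exact ⟨q, 4 * q, le_refl _, by omega, by omega⟩
      · -- n ≥ q*a + 4*q + 1 ≥ (q+1)*a
        have hge : (q + 1) * a ≤ n := by
          have h1 : (q + 1) * a = q * a + a := by ring
          omega
        have hm0 : q + 1 ≤ n / a := (Nat.le_div_iff_mul_le ha0).mpr hge
        exact key (n / a) hm0 hdm2 (by omega)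
    · -- a % 4 ≥ 2, F + 1 = q*a + a
      have hge : (q + 1) * a ≤ n := by
        have h1 : (q + 1) * a = q * a + a := by ring
        omega
      have hm0 : q + 1 ≤ n / a := (Nat.le_div_iff_mul_le ha0).mpr hge
      exact key (n / a) hm0 hdm2 (by omega)
end
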